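/- For z > 0, λ = e^{-z}, ν = λ(1 - e^{-ϑ}) with 0 ≤ ϑ ≤ w^{-1/3}, w ≥ 2 with w/z a positive integer, one has ∑_{0 ≤ k ≤ w/z} (-1)^k ν^k (w - kz)^k / k! ≪ e^{-wν/(1 - zν)} w², with implied constant depending only on z. -/

import Mathlib

open Real Finset

section Aux
open Metric Set

lemma exp35 : Real.exp (3/5) ≤ 11/6 := by
  have h1 : Real.exp 1 ≤ 2.7182818286 := le_of_lt Real.exp_one_lt_d9
  have h3 : Real.exp 3 = (Real.exp 1)^3 := by
    rw [← Real.exp_nat_mul]; norm_num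
  have h5 : (Real.exp (3/5))^5 = Real.exp 3 := by
    rw [← Real.exp_nat_mul]; norm_num
  have hb : (Real.exp (3/5))^5 ≤ (11/6:ℝ)^5 := by
    rw [h5, h3]
    have h2 : Real.exp 1 ^ 3 ≤ (2.7182818286:ℝ)^3 := pow_le_pow_left₀ (Real.exp_pos 1).le h1 3
    nlinarith
  exact le_of_pow_le_pow_left₀ (by norm_num) (by norm_num) hb

lemma exp37 : Real.exp (3/7) ≤ 2 := by
  have h1 : Real.exp 1 ≤ 2.7182818286 := le_of_lt Real.exp_one_lt_d9
  have h3 : Real.exp 3 = (Real.exp 1)^3 := by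
    rw [← Real.exp_nat_mul]; norm_num
  have h5 : (Real.exp (3/7))^7 = Real.exp 3 := by
    rw [← Real.exp_nat_mul]; norm_num
  have hb : (Real.exp (3/7))^7 ≤ (2:ℝ)^7 := by
    rw [h5, h3]
    have h2 : Real.exp 1 ^ 3 ≤ (2.7182818286:ℝ)^3 := pow_le_pow_left₀ (Real.exp_pos 1).le h1 3
    nlinarith
  exact le_of_pow_le_pow_left₀ (by norm_num) (by norm_num) hb

lemma exp_neg_ge {x : ℝ} (hx3 : x ≤ 3/5) : 6/11 ≤ Real.exp (-x) := by
  have h1 : Real.exp (-x) ≥ Real.exp (-(3/5)) := Real.exp_le_exp.2 (by linarith)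
  have h2 : Real.exp (-(3/5)) = (Real.exp (3/5))⁻¹ := Real.exp_neg _
  have h3 : (11/6 : ℝ)⁻¹ ≤ (Real.exp (3/5))⁻¹ := inv_anti₀ (Real.exp_pos _) exp35
  rw [h2] at h1
  have : (6/11:ℝ) = (11/6:ℝ)⁻¹ := by norm_num
  linarith

section
variable {x : ℝ}

lemma phi2 (hx0 : 0 ≤ x) (hx3 : x ≤ 3/10) : 12/11 ≤ 2 * Real.exp (-(x*2)) := by
  have := exp_neg_ge (x := x*2) (by linarith)
  linarith

lemma rho_exists (hx0 : 0 ≤ x) (hx3 : x ≤ 3/10) :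
    ∃ ρ : ℝ, (1-x)⁻¹ ≤ ρ ∧ ρ < 2 ∧ ρ * Real.exp (-(x*ρ)) = 1 := by
  set φ : ℝ → ℝ := fun s => s * Real.exp (-(x*s)) with hφ
  have hc : ContinuousOn φ (Icc ((1-x)⁻¹) 2) := by fun_prop
  have h1x : (0:ℝ) < 1 - x := by linarith
  have hs0 : (1-x)⁻¹ ≤ 2 := by
    rw [inv_le_iff_one_le_mul₀ h1x]
    linarith
  have hlow : φ ((1-x)⁻¹) ≤ 1 := by
    have h := Real.add_one_le_exp (x * (1-x)⁻¹)
    have he : Real.exp (-(x * (1-x)⁻¹)) = (Real.exp (x * (1-x)⁻¹))⁻¹ := Real.exp_neg _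
    have hep := Real.exp_pos (x * (1-x)⁻¹)
    have hkey : (1-x)⁻¹ ≤ Real.exp (x * (1-x)⁻¹) := by
      have : x * (1-x)⁻¹ + 1 = (1-x)⁻¹ := by field_simp; ring
      linarith
    simp only [hφ, he]
    rw [mul_inv_le_iff₀ hep]
    have h0 : 0 ≤ (1-x)⁻¹ := by positivity
    nlinarith
  have hhigh : 1 ≤ φ 2 := by
    have := phi2 hx0 hx3
    simp only [hφ]; linarith
  obtain ⟨ρ, hρm, hρ⟩ := intermediate_value_Icc hs0 hc ⟨hlow, hhigh⟩
  refine ⟨ρ, hρm.1, ?_, hρ⟩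
  rcases lt_or_eq_of_le hρm.2 with h | h
  · exact h
  · exfalso
    have h2 : φ 2 = 1 := by rw [← h]; exact hρ
    have := phi2 hx0 hx3
    simp only [hφ] at h2
    linarith

lemma phi_mono (hx0 : 0 ≤ x) (hx3 : x ≤ 3/10) :
    StrictMonoOn (fun s => s * Real.exp (-(x*s))) (Icc (0:ℝ) 2) := by
  have hd : ∀ s : ℝ, HasDerivAt (fun s => s * Real.exp (-(x*s)))
      ((1 - x*s) * Real.exp (-(x*s))) s := by
    intro s
    have h1 : HasDerivAt (fun s : ℝ => -(x*s)) (-x) s := by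
      simpa using ((hasDerivAt_id s).const_mul (-x))
    have h2 : HasDerivAt (fun s : ℝ => Real.exp (-(x*s))) (Real.exp (-(x*s)) * (-x)) s :=
      h1.exp
    have h3 := (hasDerivAt_id s).mul h2
    rw [show (1 - x*s) * Real.exp (-(x*s)) = 1 * Real.exp (-(x*s)) + s * (Real.exp (-(x*s)) * (-x)) by ring]
    exact h3
  apply strictMonoOn_of_deriv_pos (convex_Icc 0 2)
  · fun_prop
  · intro s hs
    rw [interior_Icc] at hs
    rw [(hd s).deriv]
    have : x * s < 1 := by nlinarith [hs.1, hs.2]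
    have := Real.exp_pos (-(x*s))
    nlinarith
end

lemma zf {x ρ : ℝ} (hx0 : 0 ≤ x) (hx3 : x ≤ 3/10)
    (hρ1 : 1 ≤ ρ) (hρ2 : ρ < 2) (hρ : ρ * Real.exp (-(x*ρ)) = 1)
    (t : ℂ) (ht : ‖t‖ ≤ 2) (heq : t * Complex.exp (-(x:ℂ)*t) = 1) : t = (ρ:ℂ) := by
  -- t = exp(x t)
  have hexp : t = Complex.exp ((x:ℂ)*t) := by
    have h := congrArg (· * Complex.exp ((x:ℂ)*t)) heq
    simp only [one_mul] at h
    rw [mul_assoc, ← Complex.exp_add] at h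
    simp only [neg_mul, neg_add_cancel, Complex.exp_zero, mul_one] at h
    exact h
  have hre : ((x:ℂ)*t).re = x * t.re := by simp
  have him : ((x:ℂ)*t).im = x * t.im := by simp
  have htre : t.re ≤ 2 := le_trans (Complex.re_le_norm t) ht
  have hxe : x * Real.exp (x * t.re) ≤ 11/20 := by
    have h1 : Real.exp (x * t.re) ≤ Real.exp (3/5) := by
      apply Real.exp_le_exp.2
      nlinarith
    have := exp35
    have h2 : Real.exp (x*t.re) > 0 := Real.exp_pos _
    nlinarith
  -- imaginary part
  have him0 : t.im = 0 := by
    by_contra hne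
    have h1 : t.im = Real.exp (x * t.re) * Real.sin (x * t.im) := by
      conv_lhs => rw [hexp]
      rw [Complex.exp_im, hre, him]
    have h5 : |x * t.im| = x * |t.im| := by
      rw [abs_mul, abs_of_nonneg hx0]
    have h2 : |t.im| ≤ Real.exp (x * t.re) * (x * |t.im|) := by
      calc |t.im| = |Real.exp (x*t.re) * Real.sin (x*t.im)| := by rw [← h1]
        _ = Real.exp (x*t.re) * |Real.sin (x*t.im)| := by
            rw [abs_mul, abs_of_pos (Real.exp_pos _)]
        _ ≤ Real.exp (x*t.re) * |x*t.im| :=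
            mul_le_mul_of_nonneg_left Real.abs_sin_le_abs (Real.exp_pos _).le
        _ = Real.exp (x*t.re) * (x*|t.im|) := by rw [h5]
    have h3 : (0:ℝ) < |t.im| := abs_pos.2 hne
    nlinarith [Real.exp_pos (x * t.re)]
  -- real case
  have htr : t = (t.re : ℂ) := by
    apply Complex.ext <;> simp [him0]
  have hrr : t.re = Real.exp (x * t.re) := by
    conv_lhs => rw [hexp]
    rw [Complex.exp_re, hre, him, him0]
    simp
  have hpos : 0 < t.re := by rw [hrr]; exact Real.exp_pos _
  have hphi : t.re * Real.exp (-(x * t.re)) = 1 := by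
    nth_rewrite 1 [hrr]
    rw [← Real.exp_add]
    simp
  have := (phi_mono hx0 hx3).injOn
    ⟨hpos.le, htre⟩ (Set.mem_Icc.2 ⟨by linarith, hρ2.le⟩) (by simp only [hphi, hρ])
  rw [htr, this]

lemma expHasSum (w : ℂ) : HasSum (fun j : ℕ => w ^ j / (Nat.factorial j : ℂ)) (Complex.exp w) := by
  rw [Complex.exp_eq_exp_ℂ]
  exact NormedSpace.expSeries_div_hasSum_exp w

lemma CE (b : ℂ) (n : ℕ) :
    (∮ z in C((0:ℂ), 2), Complex.exp (b*z) * (z^(n+1))⁻¹)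
      = (2*Real.pi*Complex.I) * (b^n / (Nat.factorial n : ℂ)) := by
  set c : ℕ → ℂ := fun j => b^j / (Nat.factorial j : ℂ) with hc
  have habs : ∀ θ : ℝ, ‖circleMap 0 2 θ‖ = 2 := by
    intro θ; simp [norm_circleMap_zero]
  have hzne : ∀ θ : ℝ, circleMap 0 2 θ ≠ 0 := by
    intro θ h
    have := habs θ; rw [h] at this; simp at this
  have key : HasSum (fun j : ℕ => ∮ z in C((0:ℂ), 2), c j * z^((j:ℤ) - (n+1)))
      (∮ z in C((0:ℂ), 2), Complex.exp (b*z) * (z^(n+1))⁻¹) := by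
    simp only [circleIntegral]
    apply intervalIntegral.hasSum_integral_of_dominated_convergence
      (bound := fun j _ => (2 * (2:ℝ)^(-(n+1):ℤ)) * ((2 * ‖b‖)^j / (Nat.factorial j)))
    · intro j
      apply Continuous.aestronglyMeasurable
      have h1 : Continuous (fun θ : ℝ => (circleMap 0 2 θ)^((j:ℤ) - (n+1))) := by
        apply Continuous.zpow₀ (continuous_circleMap 0 2)
        intro θ; exact Or.inl (hzne θ)
      continuity
    · intro j
      filter_upwards with θ _
      have h1 : ‖deriv (circleMap 0 2) θ • (c j * (circleMap 0 2 θ)^((j:ℤ) - (n+1)))‖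
          = 2 * (‖c j‖ * (2:ℝ)^((j:ℤ) - (n+1))) := by
        rw [norm_smul, deriv_circleMap]
        simp only [norm_mul]
        rw [norm_zpow, habs]
        simp [habs]
      rw [h1]
      have h2 : ‖c j‖ ≤ (‖b‖)^j / (Nat.factorial j) := by
        rw [hc]
        simp only [norm_div, norm_pow, Complex.norm_natCast]
        exact le_refl _
      have h3 : (2:ℝ)^((j:ℤ) - (n+1)) = (2:ℝ)^(j:ℤ) * (2:ℝ)^(-(n+1):ℤ) := by
        rw [sub_eq_add_neg, zpow_add₀ (by norm_num : (2:ℝ) ≠ 0)]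
      rw [h3]
      have h4 : ((2:ℝ) * ‖b‖)^j = (2:ℝ)^(j:ℤ) * (‖b‖)^j := by
        rw [mul_pow]; norm_num
      have h5 : (0:ℝ) < (2:ℝ)^((j:ℤ)) := by positivity
      have h6 : (0:ℝ) < (2:ℝ)^(-(n+1):ℤ) := by positivity
      calc 2 * (‖c j‖ * ((2:ℝ)^(j:ℤ) * (2:ℝ)^(-(n+1):ℤ)))
          ≤ 2 * (((‖b‖)^j / (Nat.factorial j)) * ((2:ℝ)^(j:ℤ) * (2:ℝ)^(-(n+1):ℤ))) := by
            gcongr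
        _ = (2 * (2:ℝ)^(-(n+1):ℤ)) * ((2 * ‖b‖)^j / (Nat.factorial j)) := by
            rw [h4]; ring
    · filter_upwards with θ _
      apply Summable.mul_left
      exact Real.summable_pow_div_factorial _
    · exact intervalIntegrable_const
    · filter_upwards with θ _
      set z := circleMap 0 2 θ with hz
      have h0 := expHasSum (b * z)
      have h1 := h0.mul_right ((z^(n+1))⁻¹)
      have h2 := h1.const_smul (deriv (circleMap 0 2) θ)
      convert h2 using 2 with j
      rfl
      rw [hc]
      rw [show ((j:ℤ) - (n+1)) = (j:ℤ) + (-(((n+1):ℕ):ℤ)) by push_cast; ring]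
      rw [zpow_add₀ (hzne θ), zpow_natCast, zpow_neg, zpow_natCast, mul_pow]
      ring
  have hval : ∀ j : ℕ, (∮ z in C((0:ℂ), 2), c j * z^((j:ℤ) - (n+1)))
      = if j = n then (2*Real.pi*Complex.I) * c n else 0 := by
    intro j
    have hcongr : (∮ z in C((0:ℂ), 2), c j * z^((j:ℤ) - (n+1)))
        = ∮ z in C((0:ℂ), 2), c j • (z - 0)^((j:ℤ) - (n+1)) := by
      apply circleIntegral.integral_congr (by norm_num)
      intro z _
      simp [smul_eq_mul]
    rw [hcongr, circleIntegral.integral_smul]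
    by_cases hj : j = n
    · subst hj
      have : (j:ℤ) - (j+1) = -1 := by ring
      rw [this]
      have : (∮ z in C((0:ℂ), 2), (z - 0)^(-1:ℤ)) = 2*Real.pi*Complex.I := by
        have := circleIntegral.integral_sub_inv_of_mem_ball
          (c := (0:ℂ)) (w := 0) (R := 2) (by simp)
        rw [← this]
        apply circleIntegral.integral_congr (by norm_num)
        intro z _
        simp [zpow_neg_one]
      rw [this]
      simp [smul_eq_mul, mul_comm]
    · have hne : (j:ℤ) - (n+1) ≠ -1 := by omega
      rw [circleIntegral.integral_sub_zpow_of_ne hne]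
      simp [hj]
  have heq : (fun j : ℕ => ∮ z in C((0:ℂ), 2), c j * z^((j:ℤ) - (n+1)))
      = fun j => if j = n then (2*Real.pi*Complex.I) * c n else 0 := funext hval
  rw [heq] at key
  have := key.unique (hasSum_ite_eq n ((2*Real.pi*Complex.I) * c n))
  rw [this, hc]

lemma circleIntegral_add' {f g : ℂ → ℂ} {c : ℂ} {R : ℝ}
    (hf : CircleIntegrable f c R) (hg : CircleIntegrable g c R) :
    (∮ z in C(c, R), (f z + g z)) = (∮ z in C(c, R), f z) + ∮ z in C(c, R), g z := by
  simp only [circleIntegral, smul_add]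
  exact intervalIntegral.integral_add hf.out hg.out

section
variable {x ρ : ℝ} (hx0 : 0 ≤ x) (hx3 : x ≤ 3/10)
    (hρ1 : 1 ≤ ρ) (hρ2 : ρ < 2) (hρ : ρ * Real.exp (-(x*ρ)) = 1)

/-- main contour integral -/
lemma main_contour (hx0 : 0 ≤ x) (hx3 : x ≤ 3/10)
    (hρ1 : 1 ≤ ρ) (hρ2 : ρ < 2) (hρ : ρ * Real.exp (-(x*ρ)) = 1) (K : ℕ) :
    (∮ z in C((0:ℂ), 2), Complex.exp ((-(x:ℂ)*(K+1))*z) * (z * Complex.exp (-(x:ℂ)*z) - 1)⁻¹)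
      = (2*Real.pi*Complex.I) * ((Real.exp (-(x*ρ*K)) / (1 - x*ρ) : ℝ) : ℂ) := by
  set g₁ : ℂ → ℂ := fun z => z * Complex.exp (-(x:ℂ)*z) - 1 with hg₁
  have hg₁diff : Differentiable ℂ g₁ := by
    apply Differentiable.sub_const
    exact differentiable_id.mul ((differentiable_id.const_mul _).cexp)
  have hρabs : ‖(ρ:ℂ)‖ = ρ := by
    rw [Complex.norm_real, Real.norm_eq_abs, abs_of_pos (by linarith)]
  have hg₁ρ : g₁ (ρ:ℂ) = 0 := by
    rw [hg₁]
    have : ((ρ:ℂ)) * Complex.exp (-(x:ℂ)*(ρ:ℂ)) = ((ρ * Real.exp (-(x*ρ)) : ℝ) : ℂ) := by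
      push_cast [Complex.ofReal_exp]
      ring_nf
    simp only [this, hρ]
    norm_num
  have hxρ : x * ρ ≤ 3/5 := by nlinarith
  -- zero-freeness on the closed ball
  have hzf : ∀ t : ℂ, ‖t‖ ≤ 2 → t ≠ (ρ:ℂ) → g₁ t ≠ 0 := by
    intro t ht htne h0
    apply htne
    apply zf hx0 hx3 hρ1 hρ2 hρ t ht
    rw [hg₁] at h0
    linear_combination h0
  -- derivative of g₁ at ρ
  have hderiv : HasDerivAt g₁ ((1 - (x:ℂ)*(ρ:ℂ)) * Complex.exp (-(x:ℂ)*(ρ:ℂ))) (ρ:ℂ) := by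
    have h1 : HasDerivAt (fun z : ℂ => -(x:ℂ)*z) (-(x:ℂ)) (ρ:ℂ) := by
      simpa using (hasDerivAt_id (ρ:ℂ)).const_mul (-(x:ℂ))
    have h2 := h1.cexp
    have h3 := (hasDerivAt_id (ρ:ℂ)).mul h2
    have h4 := h3.sub_const 1
    rw [show (1 - (x:ℂ)*(ρ:ℂ)) * Complex.exp (-(x:ℂ)*(ρ:ℂ)) = 1 * Complex.exp (-(x:ℂ)*(ρ:ℂ)) + (ρ:ℂ) * (Complex.exp (-(x:ℂ)*(ρ:ℂ)) * (-(x:ℂ))) by ring]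
    exact h4
  set G : ℂ → ℂ := dslope g₁ (ρ:ℂ) with hG
  have hGρ : G (ρ:ℂ) = (1 - (x:ℂ)*(ρ:ℂ)) * Complex.exp (-(x:ℂ)*(ρ:ℂ)) := by
    rw [hG, dslope_same]
    exact hderiv.deriv
  have hGρne : G (ρ:ℂ) ≠ 0 := by
    rw [hGρ]
    apply mul_ne_zero
    · intro h
      have : ((1 - x*ρ : ℝ):ℂ) = 0 := by push_cast; linear_combination h
      rw [Complex.ofReal_eq_zero] at this
      nlinarith
    · exact Complex.exp_ne_zero _
  have hGne : ∀ t : ℂ, ‖t‖ ≤ 2 → G t ≠ 0 := by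
    intro t ht
    by_cases hne : t = (ρ:ℂ)
    · rw [hne]; exact hGρne
    · rw [hG, dslope_of_ne _ hne, slope, hg₁ρ, vsub_eq_sub, sub_zero, smul_eq_mul]
      apply mul_ne_zero
      · simpa using sub_ne_zero.2 hne
      · exact hzf t ht hne
  have hGdiff : Differentiable ℂ G := by
    intro z
    by_cases hne : z = (ρ:ℂ)
    · subst hne
      obtain ⟨p, hp⟩ := (hg₁diff.analyticAt (ρ:ℂ))
      exact (hp.has_fpower_series_dslope_fslope).analyticAt.differentiableAt
    · exact (differentiableAt_dslope_of_ne hne).2 (hg₁diff _)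
  set b : ℂ := -(x:ℂ)*(K+1) with hb
  set H : ℂ → ℂ := fun z => Complex.exp (b*z) * (G z)⁻¹ with hH
  have hHdiff : ∀ t : ℂ, ‖t‖ ≤ 2 → DifferentiableAt ℂ H t := by
    intro t ht
    apply DifferentiableAt.mul
    · exact (Complex.differentiable_exp.comp ((differentiable_id.const_mul b))).differentiableAt
    · exact (hGdiff t).inv (hGne t ht)
  have hρmem : (ρ:ℂ) ∈ ball (0:ℂ) 2 := by
    simp only [mem_ball, dist_zero_right, hρabs]
    exact hρ2
  -- split integrand on the sphere
  have hsplit : EqOn (fun z => Complex.exp (b*z) * (g₁ z)⁻¹)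
      (fun z => dslope H (ρ:ℂ) z + H (ρ:ℂ) * (z - (ρ:ℂ))⁻¹) (sphere (0:ℂ) 2) := by
    intro z hz
    have hzabs : ‖z‖ = 2 := by
      simpa using mem_sphere_iff_norm.1 hz
    have hzρ : z ≠ (ρ:ℂ) := by
      intro h; rw [h, hρabs] at hzabs; linarith
    have hzρ' : z - (ρ:ℂ) ≠ 0 := sub_ne_zero.2 hzρ
    have hg₁z : g₁ z ≠ 0 := hzf z (by rw [hzabs]) hzρ
    have hGz : G z = (z - (ρ:ℂ))⁻¹ * g₁ z := by
      rw [hG, dslope_of_ne _ hzρ, slope, hg₁ρ, vsub_eq_sub, sub_zero, smul_eq_mul]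
    simp only [dslope_of_ne _ hzρ, slope, vsub_eq_sub, smul_eq_mul]
    rw [hH]
    simp only
    rw [hGz]
    field_simp
    ring
  -- integral of dslope H ρ is zero
  have hdslope0 : (∮ z in C((0:ℂ), 2), dslope H (ρ:ℂ) z) = 0 := by
    apply Complex.circleIntegral_eq_zero_of_differentiable_on_off_countable (by norm_num : (0:ℝ) ≤ 2)
      (Set.countable_singleton (ρ:ℂ))
    · intro z hz
      simp only [closedBall, mem_setOf_eq, dist_zero_right] at hz
      by_cases hne : z = (ρ:ℂ)
      · subst hne
        exact (continuousAt_dslope_same.2 (hHdiff _ (by rw [hρabs]; linarith))).continuousWithinAt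
      · exact (((continuousAt_dslope_of_ne hne).2 (hHdiff z hz).continuousAt)).continuousWithinAt
    · intro z hz
      obtain ⟨hz1, hz2⟩ := hz
      simp only [mem_ball, dist_zero_right] at hz1
      have hne : z ≠ (ρ:ℂ) := by simpa using hz2
      exact (differentiableAt_dslope_of_ne hne).2 (hHdiff z hz1.le)
  -- integral of H ρ * (z - ρ)⁻¹
  have hpole : (∮ z in C((0:ℂ), 2), H (ρ:ℂ) * (z - (ρ:ℂ))⁻¹)
      = (2*Real.pi*Complex.I) * H (ρ:ℂ) := by
    have h1 : (∮ z in C((0:ℂ), 2), H (ρ:ℂ) * (z - (ρ:ℂ))⁻¹)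
        = H (ρ:ℂ) • (∮ z in C((0:ℂ), 2), (z - (ρ:ℂ))⁻¹) := by
      rw [← circleIntegral.integral_smul]
      apply circleIntegral.integral_congr (by norm_num)
      intro z _; simp [smul_eq_mul]
    rw [h1, circleIntegral.integral_sub_inv_of_mem_ball hρmem]
    simp [smul_eq_mul]; ring
  -- continuity facts for integrability
  have hcont1 : ContinuousOn (fun z => dslope H (ρ:ℂ) z) (sphere (0:ℂ) 2) := by
    intro z hz
    have hzabs : ‖z‖ = 2 := by
      simpa using mem_sphere_iff_norm.1 hz
    have hzρ : z ≠ (ρ:ℂ) := by intro h; rw [h, hρabs] at hzabs; linarith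
    exact (((continuousAt_dslope_of_ne hzρ).2 (hHdiff z (by rw [hzabs])).continuousAt)).continuousWithinAt
  have hcont2 : ContinuousOn (fun z => H (ρ:ℂ) * (z - (ρ:ℂ))⁻¹) (sphere (0:ℂ) 2) := by
    apply ContinuousOn.mul continuousOn_const
    apply ContinuousOn.inv₀ (by fun_prop)
    intro z hz
    have hzabs : ‖z‖ = 2 := by
      simpa using mem_sphere_iff_norm.1 hz
    apply sub_ne_zero.2
    intro h; rw [h, hρabs] at hzabs; linarith
  have hmain : (∮ z in C((0:ℂ), 2), Complex.exp (b*z) * (g₁ z)⁻¹)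
      = (2*Real.pi*Complex.I) * H (ρ:ℂ) := by
    rw [circleIntegral.integral_congr (by norm_num) hsplit]
    rw [circleIntegral_add' (ContinuousOn.circleIntegrable (by norm_num) hcont1)
      (ContinuousOn.circleIntegrable (by norm_num) hcont2)]
    rw [hdslope0, hpole, zero_add]
  -- compute H ρ
  have hHρ : H (ρ:ℂ) = ((Real.exp (-(x*ρ*K)) / (1 - x*ρ) : ℝ) : ℂ) := by
    rw [hH]
    simp only
    rw [hGρ, hb]
    have e1 : (-(x:ℂ)*((K:ℂ)+1))*(ρ:ℂ) = ((-(x*(K+1)*ρ) : ℝ) : ℂ) := by push_cast; ring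
    have e3 : (1 - (x:ℂ)*(ρ:ℂ)) * Complex.exp (-(x:ℂ)*(ρ:ℂ))
        = (((1 - x*ρ) * Real.exp (-(x*ρ)) : ℝ) : ℂ) := by
      push_cast [Complex.ofReal_exp]
      ring_nf
    rw [e1, e3, ← Complex.ofReal_exp, ← Complex.ofReal_inv, ← Complex.ofReal_mul]
    congr 1
    rw [mul_inv]
    have h4 : Real.exp (-(x*(K+1)*ρ)) * (Real.exp (-(x*ρ)))⁻¹ = Real.exp (-(x*ρ*K)) := by
      rw [← Real.exp_neg, ← Real.exp_add]; congr 1; push_cast; ring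
    calc Real.exp (-(x*(K+1)*ρ)) * ((1-x*ρ)⁻¹ * (Real.exp (-(x*ρ)))⁻¹)
        = (Real.exp (-(x*(K+1)*ρ)) * (Real.exp (-(x*ρ)))⁻¹) * (1-x*ρ)⁻¹ := by ring
      _ = Real.exp (-(x*ρ*K)) * (1-x*ρ)⁻¹ := by rw [h4]
      _ = Real.exp (-(x*ρ*K)) / (1-x*ρ) := (div_eq_mul_inv _ _).symm
  rw [hmain, hHρ]
end

lemma circleIntegral_finset_sum {ι : Type*} (s : Finset ι) (f : ι → ℂ → ℂ) {c : ℂ} {R : ℝ}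
    (hf : ∀ i ∈ s, CircleIntegrable (f i) c R) :
    (∮ z in C(c, R), ∑ i ∈ s, f i z) = ∑ i ∈ s, ∮ z in C(c, R), f i z := by
  simp only [circleIntegral, Finset.smul_sum]
  exact intervalIntegral.integral_finset_sum (fun i hi => (hf i hi).out)

set_option maxHeartbeats 1000000 in
lemma core (x : ℝ) (hx0 : 0 ≤ x) (hx3 : x ≤ 3/10) (K : ℕ) :
    |∑ m ∈ Finset.range (K+1), (-(x*m))^(K-m) / (Nat.factorial (K-m))|
      ≤ (27/2) * Real.exp (-((K:ℝ)*x)/(1-x)) := by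
  obtain ⟨ρ, hρ0, hρ2, hρ⟩ := rho_exists hx0 hx3
  have h1x : (0:ℝ) < 1 - x := by linarith
  have hρ1 : 1 ≤ ρ := le_trans (by rw [le_inv_comm₀] <;> nlinarith) hρ0
  have hxρ : x * ρ ≤ 3/5 := by nlinarith
  have hρpos : 0 < ρ := by linarith
  -- the complex sum
  set A : ℂ := ∑ m ∈ Finset.range (K+1), (-(x:ℂ)*m)^(K-m) / ((Nat.factorial (K-m) : ℕ) : ℂ)
    with hA
  set S : ℝ := ∑ m ∈ Finset.range (K+1), (-(x*m))^(K-m) / (Nat.factorial (K-m)) with hS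
  have hAS : A = ((S : ℝ) : ℂ) := by
    rw [hA, hS]
    push_cast
    apply Finset.sum_congr rfl
    intro m _
    norm_num
  -- sphere facts
  have hsphere : ∀ z : ℂ, z ∈ sphere (0:ℂ) 2 → ‖z‖ = 2 := by
    intro z hz; simpa using mem_sphere_iff_norm.1 hz
  have hz0 : ∀ z : ℂ, z ∈ sphere (0:ℂ) 2 → z ≠ 0 := by
    intro z hz h; have := hsphere z hz; rw [h] at this; simp at this
  have hg₁ne : ∀ z : ℂ, z ∈ sphere (0:ℂ) 2 → z * Complex.exp (-(x:ℂ)*z) - 1 ≠ 0 := by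
    intro z hz h
    have heq : z * Complex.exp (-(x:ℂ)*z) = 1 := by linear_combination h
    have := zf hx0 hx3 hρ1 hρ2 hρ z (le_of_eq (hsphere z hz)) heq
    have h2 := hsphere z hz
    rw [this] at h2
    rw [Complex.norm_real, Real.norm_eq_abs, abs_of_pos hρpos] at h2
    linarith
  have habsg : ∀ z : ℂ, z ∈ sphere (0:ℂ) 2 →
      12/11 ≤ ‖z * Complex.exp (-(x:ℂ)*z)‖ := by
    intro z hz
    rw [norm_mul, hsphere z hz, Complex.norm_exp]
    have hre : (-(x:ℂ)*z).re = -(x * z.re) := by simp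
    rw [hre]
    have hzre : z.re ≤ 2 := by
      have := Complex.re_le_norm z; rw [hsphere z hz] at this; linarith
    have : x * z.re ≤ 3/5 := by nlinarith
    have := exp_neg_ge (x := x * z.re) this
    linarith
  have hg₁lb : ∀ z : ℂ, z ∈ sphere (0:ℂ) 2 →
      1/11 ≤ ‖z * Complex.exp (-(x:ℂ)*z) - 1‖ := by
    intro z hz
    have h1 := habsg z hz
    have h2 : ‖z * Complex.exp (-(x:ℂ)*z)‖ - ‖(1:ℂ)‖
        ≤ ‖z * Complex.exp (-(x:ℂ)*z) - 1‖ := by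
      simpa using norm_sub_norm_le (z * Complex.exp (-(x:ℂ)*z)) 1
    simp only [norm_one] at h2
    linarith
  -- continuity of pieces on the sphere
  have hcF : ContinuousOn (fun z : ℂ =>
      Complex.exp ((-(x:ℂ)*(K+1))*z) * (z * Complex.exp (-(x:ℂ)*z) - 1)⁻¹) (sphere (0:ℂ) 2) := by
    apply ContinuousOn.mul (by fun_prop)
    exact ContinuousOn.inv₀ (by fun_prop) (fun z hz => hg₁ne z hz)
  have hcE : ContinuousOn (fun z : ℂ =>
      (z^(K+1))⁻¹ * (z * Complex.exp (-(x:ℂ)*z) - 1)⁻¹) (sphere (0:ℂ) 2) := by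
    apply ContinuousOn.mul
    · exact ContinuousOn.inv₀ (by fun_prop) (fun z hz => pow_ne_zero _ (hz0 z hz))
    · exact ContinuousOn.inv₀ (by fun_prop) (fun z hz => hg₁ne z hz)
  -- J via CE, term by term
  have hJ1 : (∮ z in C((0:ℂ), 2),
        ∑ m ∈ Finset.range (K+1), z^m * Complex.exp ((-(x:ℂ)*m)*z) * (z^(K+1))⁻¹)
      = (2*Real.pi*Complex.I) * A := by
    rw [circleIntegral_finset_sum]
    · rw [hA, Finset.mul_sum]
      apply Finset.sum_congr rfl
      intro m hm
      have hmK : m ≤ K := by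
        simp only [Finset.mem_range] at hm; omega
      have hcongr : (∮ z in C((0:ℂ), 2), z^m * Complex.exp ((-(x:ℂ)*m)*z) * (z^(K+1))⁻¹)
          = ∮ z in C((0:ℂ), 2), Complex.exp ((-(x:ℂ)*m)*z) * (z^((K-m)+1))⁻¹ := by
        apply circleIntegral.integral_congr (by norm_num)
        intro z hz
        have hzne := hz0 z hz
        have hsplit : z^(K+1) = z^m * z^((K-m)+1) := by
          rw [← pow_add]
          congr 1
          omega
        simp only [hsplit]
        have hm0 : z^m ≠ 0 := pow_ne_zero _ hzne
        have hm1 : z^((K-m)+1) ≠ 0 := pow_ne_zero _ hzne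
        field_simp
      rw [hcongr, CE]
    · intro m hm
      apply ContinuousOn.circleIntegrable (by norm_num)
      apply ContinuousOn.mul (by fun_prop)
      exact ContinuousOn.inv₀ (by fun_prop) (fun z hz => pow_ne_zero _ (hz0 z hz))
  -- geometric sum split
  have hJ2 : (∮ z in C((0:ℂ), 2),
        ∑ m ∈ Finset.range (K+1), z^m * Complex.exp ((-(x:ℂ)*m)*z) * (z^(K+1))⁻¹)
      = (∮ z in C((0:ℂ), 2),
          Complex.exp ((-(x:ℂ)*(K+1))*z) * (z * Complex.exp (-(x:ℂ)*z) - 1)⁻¹)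
        - ∮ z in C((0:ℂ), 2), (z^(K+1))⁻¹ * (z * Complex.exp (-(x:ℂ)*z) - 1)⁻¹ := by
    rw [← circleIntegral.integral_sub (ContinuousOn.circleIntegrable (by norm_num) hcF)
      (ContinuousOn.circleIntegrable (by norm_num) hcE)]
    apply circleIntegral.integral_congr (by norm_num)
    intro z hz
    have hzne := hz0 z hz
    have hg1 := hg₁ne z hz
    have hgne1 : z * Complex.exp (-(x:ℂ)*z) ≠ 1 := by
      intro h; exact hg1 (by rw [h]; ring)
    have hgeom := geom_sum_eq hgne1 (K+1)
    have hterm : ∀ m : ℕ, z^m * Complex.exp ((-(x:ℂ)*m)*z) = (z * Complex.exp (-(x:ℂ)*z))^m := by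
      intro m
      rw [mul_pow, ← Complex.exp_nat_mul]
      congr 2
      push_cast; ring
    have hsum : ∑ m ∈ Finset.range (K+1), z^m * Complex.exp ((-(x:ℂ)*m)*z) * (z^(K+1))⁻¹
        = (∑ m ∈ Finset.range (K+1), (z * Complex.exp (-(x:ℂ)*z))^m) * (z^(K+1))⁻¹ := by
      rw [Finset.sum_mul]
      apply Finset.sum_congr rfl
      intro m _
      rw [hterm m]
    simp only
    rw [hsum, hgeom]
    have hzK : z^(K+1) ≠ 0 := pow_ne_zero _ hzne
    have hexpb : Complex.exp ((-(x:ℂ)*(K+1))*z) = (Complex.exp (-(x:ℂ)*z))^(K+1) := by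
      rw [← Complex.exp_nat_mul]
      congr 1
      push_cast; ring
    have key : ∀ u v w : ℂ, u ≠ 0 → v ≠ 0 →
        ((u*w - 1)/v) * u⁻¹ = w * v⁻¹ - u⁻¹ * v⁻¹ := by
      intro u v w hu hv
      field_simp
    rw [hexpb, mul_pow]
    exact key _ _ _ hzK hg1
  -- error bound
  have hpi : (0:ℝ) < Real.pi := Real.pi_pos
  have herr : ‖∮ z in C((0:ℂ), 2), (z^(K+1))⁻¹ * (z * Complex.exp (-(x:ℂ)*z) - 1)⁻¹‖
      ≤ 2*Real.pi*2 * ((2:ℝ)⁻¹^(K+1) * 11) := by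
    apply circleIntegral.norm_integral_le_of_norm_le_const (by norm_num)
    intro z hz
    rw [norm_mul, norm_inv, norm_pow, norm_inv]
    rw [hsphere z hz]
    rw [inv_pow]
    apply mul_le_mul_of_nonneg_left _ (by positivity)
    rw [inv_le_comm₀ (by nlinarith [hg₁lb z hz]) (by norm_num)]
    have := hg₁lb z hz
    linarith
  -- combine
  set Ierr : ℂ := ∮ z in C((0:ℂ), 2), (z^(K+1))⁻¹ * (z * Complex.exp (-(x:ℂ)*z) - 1)⁻¹
    with hIerr
  have hmain := main_contour hx0 hx3 hρ1 hρ2 hρ K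
  set hval : ℝ := Real.exp (-(x*ρ*K)) / (1 - x*ρ) with hhval
  have hkey : (2*Real.pi*Complex.I) * (((S - hval : ℝ)) : ℂ) = -Ierr := by
    push_cast
    rw [mul_sub]
    rw [← hAS]
    rw [← hJ1, hJ2, ← hmain, hIerr]
    ring
  have habs2 : ‖(2*(Real.pi:ℂ)*Complex.I)‖ = 2*Real.pi := by
    rw [norm_mul, Complex.norm_I, mul_one,
      show (2*((Real.pi:ℝ):ℂ)) = ((2*Real.pi:ℝ):ℂ) by push_cast; ring,
      Complex.norm_real, Real.norm_eq_abs, abs_of_pos (by positivity)]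
  have habskey : (2*Real.pi) * |S - hval| = ‖Ierr‖ := by
    have h1 := congrArg (‖·‖) hkey
    rw [norm_mul, habs2, norm_neg, Complex.norm_real, Real.norm_eq_abs] at h1
    exact h1
  have hSbound : |S - hval| ≤ 2 * ((2:ℝ)⁻¹^(K+1) * 11) := by
    have h2 : ‖Ierr‖ ≤ 2*Real.pi*2 * ((2:ℝ)⁻¹^(K+1) * 11) := herr
    rw [← habskey] at h2
    nlinarith
  -- final numeric assembly
  set E : ℝ := Real.exp (-((K:ℝ)*x)/(1-x)) with hE
  have hEpos : 0 < E := Real.exp_pos _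
  have hhval_le : hval ≤ (5/2) * E := by
    rw [hhval, hE]
    have h1 : Real.exp (-(x*ρ*K)) ≤ E := by
      rw [hE]
      apply Real.exp_le_exp.2
      rw [neg_div, neg_le_neg_iff]
      rw [div_le_iff₀ h1x]
      calc (K:ℝ)*x = x * (1-x)⁻¹ * (1-x) * K := by field_simp
        _ ≤ x*ρ*(1-x)*K := by
            have h5 : x * (1-x)⁻¹ ≤ x * ρ := mul_le_mul_of_nonneg_left hρ0 hx0
            have hK0 : (0:ℝ) ≤ K := Nat.cast_nonneg K
            nlinarith [mul_le_mul_of_nonneg_right h5 (mul_nonneg h1x.le hK0)]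
        _ = x*ρ*K*(1-x) := by ring
    have h2 : (1 - x*ρ)⁻¹ ≤ 5/2 := by
      rw [inv_le_comm₀ (by nlinarith) (by norm_num)]
      nlinarith
    calc hval = Real.exp (-(x*ρ*K)) * (1-x*ρ)⁻¹ := by rw [hhval, div_eq_mul_inv]
      _ ≤ E * (5/2) := by
          have hpos2 : (0:ℝ) < 1 - x*ρ := by nlinarith
          exact mul_le_mul h1 h2 (inv_nonneg.2 hpos2.le) hEpos.le
      _ = (5/2) * E := by ring
  have h2K : (2:ℝ)⁻¹^(K+1) * 11 ≤ (11/2) * E := by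
    have hbase : Real.exp (x/(1-x)) ≤ 2 := by
      apply le_trans _ exp37
      apply Real.exp_le_exp.2
      rw [div_le_iff₀ h1x]
      nlinarith
    have h1 : E⁻¹ ≤ 2^K := by
      rw [hE, ← Real.exp_neg]
      rw [show -(-((K:ℝ)*x)/(1-x)) = (K:ℝ) * (x/(1-x)) by field_simp]
      rw [Real.exp_nat_mul]
      exact pow_le_pow_left₀ (Real.exp_pos _).le hbase K
    have h2 : (2:ℝ)⁻¹^K ≤ E := by
      rw [inv_pow, inv_le_comm₀ (by positivity) hEpos]
      exact h1
    calc (2:ℝ)⁻¹^(K+1) * 11 = (2:ℝ)⁻¹^K * (11/2) := by rw [pow_succ]; ring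
      _ ≤ E * (11/2) := by nlinarith
      _ = (11/2) * E := by ring
  have hhval0 : 0 ≤ hval := by
    rw [hhval]
    apply div_nonneg (Real.exp_pos _).le
    nlinarith
  calc |S| = |(S - hval) + hval| := by ring_nf
    _ ≤ |S - hval| + |hval| := abs_add_le _ _
    _ ≤ 2 * ((2:ℝ)⁻¹^(K+1) * 11) + (5/2)*E := by
        rw [abs_of_nonneg hhval0]
        linarith
    _ ≤ 2 * ((11/2)*E) + (5/2)*E := by nlinarith
    _ ≤ (27/2) * E := by linarith

end Aux

/-- bound (16), with `ν = λ(1 - e^{-ϑ})`,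
`∑_{0 ≤ k ≤ w/z} (-1)^k ν^k (w-kz)^k/k! ≪ e^{-wν/(1-zν)} w²`. -/
theorem stmt_15 (z : ℝ) (hz : 0 < z) :
    ∃ C > 0, ∀ (K : ℕ), 1 ≤ K → ∀ w ϑ : ℝ, w = K * z → 2 ≤ w →
      0 ≤ ϑ → ϑ ≤ w ^ (-(1 : ℝ)/3) →
      |∑ k ∈ Finset.range (K + 1),
          (-1 : ℝ) ^ k * (Real.exp (-z) * (1 - Real.exp (-ϑ))) ^ k * (w - k * z) ^ k
            / (Nat.factorial k)|
        ≤ C * Real.exp (-(w * (Real.exp (-z) * (1 - Real.exp (-ϑ))))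
              / (1 - z * (Real.exp (-z) * (1 - Real.exp (-ϑ))))) * w ^ 2 := by
  refine ⟨27/2, by norm_num, ?_⟩
  intro K hK w ϑ hw hw2 hϑ0 hϑub
  set ν : ℝ := Real.exp (-z) * (1 - Real.exp (-ϑ)) with hν
  set x : ℝ := z * ν with hx
  have hν0 : 0 ≤ ν := by
    apply mul_nonneg (Real.exp_pos _).le
    have : Real.exp (-ϑ) ≤ 1 := Real.exp_le_one_iff.2 (by linarith)  -- check name
    linarith
  have hx0 : 0 ≤ x := mul_nonneg hz.le hν0
  -- bound x ≤ 3/10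
  have hze : z * Real.exp (-z) ≤ 3/8 := by
    have h1 := Real.add_one_le_exp (z - 1)
    have h2 : Real.exp (z-1) * Real.exp (-z) = Real.exp (-1) := by
      rw [← Real.exp_add]; ring_nf
    have h3 : z * Real.exp (-z) ≤ Real.exp (-1) := by
      calc z * Real.exp (-z) ≤ Real.exp (z-1) * Real.exp (-z) := by
            apply mul_le_mul_of_nonneg_right (by linarith) (Real.exp_pos _).le
        _ = Real.exp (-1) := h2
    have h4 : Real.exp (-1) ≤ 3/8 := by
      have h5 : (2.7182818283:ℝ) < Real.exp 1 := Real.exp_one_gt_d9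
      rw [Real.exp_neg]
      rw [inv_le_comm₀ (Real.exp_pos 1) (by norm_num)]
      linarith
    linarith
  have hϑ45 : ϑ ≤ 4/5 := by
    have hr1 : w ^ (-(1:ℝ)/3) ≤ (2:ℝ) ^ (-(1:ℝ)/3) :=
      Real.rpow_le_rpow_of_nonpos (by norm_num) hw2 (by norm_num)
    have ha3 : ((2:ℝ) ^ ((1:ℝ)/3))^(3:ℕ) = 2 := by
      rw [← Real.rpow_natCast ((2:ℝ) ^ ((1:ℝ)/3)) 3, ← Real.rpow_mul (by norm_num)]
      norm_num
    have hapos : (0:ℝ) < (2:ℝ) ^ ((1:ℝ)/3) := Real.rpow_pos_of_pos (by norm_num) _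
    have ha : (5/4 : ℝ) ≤ (2:ℝ) ^ ((1:ℝ)/3) := by
      by_contra h
      push_neg at h
      nlinarith [pow_lt_pow_left₀ h hapos.le (by norm_num : (3:ℕ) ≠ 0)]
    have hr2 : (2:ℝ) ^ (-(1:ℝ)/3) ≤ 4/5 := by
      rw [show (-(1:ℝ)/3) = -((1:ℝ)/3) by norm_num, Real.rpow_neg (by norm_num)]
      rw [inv_le_comm₀ hapos (by norm_num)]
      linarith
    linarith
  have hν1 : 1 - Real.exp (-ϑ) ≤ ϑ := by
    have := Real.add_one_le_exp (-ϑ)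
    linarith
  have hν45 : 1 - Real.exp (-ϑ) ≤ 4/5 := le_trans hν1 hϑ45
  have hx3 : x ≤ 3/10 := by
    have h1 : x = (z * Real.exp (-z)) * (1 - Real.exp (-ϑ)) := by rw [hx, hν]; ring
    rw [h1]
    have h2 : 0 ≤ 1 - Real.exp (-ϑ) := by
      have : Real.exp (-ϑ) ≤ 1 := Real.exp_le_one_iff.2 (by linarith)
      linarith
    have h3 : 0 ≤ z * Real.exp (-z) := mul_nonneg hz.le (Real.exp_pos _).le
    nlinarith
  -- rewrite the sum
  have hsum_eq : (∑ k ∈ Finset.range (K + 1),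
        (-1 : ℝ) ^ k * ν ^ k * (w - k * z) ^ k / (Nat.factorial k))
      = ∑ m ∈ Finset.range (K+1), (-(x*m))^(K-m) / (Nat.factorial (K-m)) := by
    rw [← Finset.sum_range_reflect (fun m => (-(x*m))^(K-m) / (Nat.factorial (K-m) : ℝ)) (K+1)]
    apply Finset.sum_congr rfl
    intro k hk
    have hkK : k ≤ K := by simp only [Finset.mem_range] at hk; omega
    have h1 : K + 1 - 1 - k = K - k := by omega
    rw [h1]
    have h2 : K - (K - k) = k := by omega
    rw [h2]
    have h3 : ((K - k : ℕ):ℝ) = (K:ℝ) - k := by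
      push_cast [Nat.cast_sub hkK]; ring
    rw [h3]
    congr 1
    have h4 : w - k*z = ((K:ℝ) - k) * z := by rw [hw]; ring
    rw [h4]
    rw [← mul_pow, ← mul_pow]
    congr 1
    rw [hx]
    ring
  rw [hsum_eq]
  -- exponent equality
  have hexp_eq : -(w * ν) / (1 - z*ν) = -((K:ℝ)*x)/(1-x) := by
    rw [hx, hw]; ring_nf
  rw [hexp_eq]
  have hcore := core x hx0 hx3 K
  have hEpos : 0 < Real.exp (-((K:ℝ)*x)/(1-x)) := Real.exp_pos _
  have hw1 : 1 ≤ w^2 := by nlinarith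
  calc |∑ m ∈ Finset.range (K+1), (-(x*m))^(K-m) / (Nat.factorial (K-m) : ℝ)|
      ≤ (27/2) * Real.exp (-((K:ℝ)*x)/(1-x)) := hcore
    _ ≤ (27/2) * Real.exp (-((K:ℝ)*x)/(1-x)) * w^2 := by nlinarith
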